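/- For every t ≥ 1, the conditional probability that a student whose perceived potential is at least t belongs to group G₂ equals P(B = 1 | Ẑ ≥ t) = p·β^α/(1−p+p·β^α); in particular this value does not depend on t and is strictly smaller than the unconditional population fraction p. -/

import Mathlib

open Set MeasureTheory Filter

lemma aux_measure_ge {Ω : Type*} [MeasurableSpace Ω] (μ : Measure Ω) [IsProbabilityMeasure μ]
    (α : ℝ) (Z : Ω → ℝ) (hZmeas : Measurable Z)
    (hZ : ∀ t : ℝ, 1 ≤ t → μ {ω | t < Z ω} = ENNReal.ofReal (t ^ (-α))) :
    ∀ s : ℝ, 1 ≤ s → μ {ω | s ≤ Z ω} = ENNReal.ofReal (s ^ (-α)) := by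
  intro s hs
  rcases eq_or_lt_of_le hs with h1 | h1
  · subst h1
    have h1' : μ {ω | (1:ℝ) < Z ω} = 1 := by
      rw [hZ 1 le_rfl]; simp
    have hge : (1 : ENNReal) ≤ μ {ω | (1:ℝ) ≤ Z ω} := by
      rw [← h1']
      exact measure_mono fun ω (hω : (1:ℝ) < Z ω) => le_of_lt hω
    have hle : μ {ω | (1:ℝ) ≤ Z ω} ≤ 1 := prob_le_one
    rw [le_antisymm hle hge]
    simp
  · -- s > 1
    set A : ℕ → Set Ω := fun n => {ω | s - 1/(n+1) < Z ω} with hA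
    have hAmeas : ∀ n, MeasurableSet (A n) := fun n =>
      measurableSet_lt measurable_const hZmeas
    have hanti : Antitone A := by
      intro m n hmn ω hω
      have : s - 1/(m+1) ≤ s - 1/(n+1) := by
        have : (1:ℝ)/(n+1) ≤ 1/(m+1) := by
          apply one_div_le_one_div_of_le (by positivity)
          exact_mod_cast Nat.succ_le_succ hmn
        linarith
      exact lt_of_le_of_lt this hω
    have hinter : (⋂ n, A n) = {ω | s ≤ Z ω} := by
      ext ω
      simp only [mem_iInter, hA, mem_setOf_eq]
      constructor
      · intro h
        by_contra hcon
        push_neg at hcon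
        obtain ⟨n, hn⟩ := exists_nat_one_div_lt (show 0 < s - Z ω by linarith)
        have := h n
        push_cast at this hn
        linarith
      · intro h n
        have : (0:ℝ) < 1/(n+1) := by positivity
        linarith
    have htend : Tendsto (μ ∘ A) atTop (nhds (μ {ω | s ≤ Z ω})) := by
      rw [← hinter]
      exact tendsto_measure_iInter_atTop (fun n => (hAmeas n).nullMeasurableSet)
        hanti ⟨0, measure_ne_top μ _⟩
    obtain ⟨N, hN⟩ := exists_nat_one_div_lt (show 0 < s - 1 by linarith)
    have heq : ∀ n ≥ N, (μ ∘ A) n = ENNReal.ofReal ((s - 1/(n+1)) ^ (-α)) := by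
      intro n hn
      have h1n : (1:ℝ) ≤ s - 1/(n+1) := by
        have : (1:ℝ)/(n+1) ≤ 1/(N+1) := by
          apply one_div_le_one_div_of_le (by positivity)
          exact_mod_cast Nat.succ_le_succ hn
        push_cast at this hN ⊢
        linarith
      exact hZ _ h1n
    have htend2 : Tendsto (fun n : ℕ => ENNReal.ofReal ((s - 1/(n+1)) ^ (-α)))
        atTop (nhds (ENNReal.ofReal (s ^ (-α)))) := by
      apply ENNReal.continuous_ofReal.continuousAt.tendsto.comp
      have hbase : Tendsto (fun n : ℕ => s - 1/(n+1)) atTop (nhds s) := by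
        have : Tendsto (fun n : ℕ => 1 / ((n : ℝ) + 1)) atTop (nhds 0) :=
          tendsto_one_div_add_atTop_nhds_zero_nat
        have h2 := (tendsto_const_nhds (x := s) (f := atTop (α := ℕ))).sub this
        simpa using h2
      exact ((Real.continuousAt_rpow_const s (-α)
        (Or.inl (by linarith))).tendsto.comp hbase)
    have : Tendsto (μ ∘ A) atTop (nhds (ENNReal.ofReal (s ^ (-α)))) :=
      htend2.congr' (by filter_upwards [eventually_ge_atTop N] with n hn using (heq n hn).symm)
    exact tendsto_nhds_unique htend this

/-- The conditional probability that a student with perceived potential at least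
`t` belongs to group G₂ equals `pβ^α/(1-p+pβ^α)` for every `t ≥ 1`; in
particular it does not depend on `t` and is strictly smaller than `p`. -/
theorem conditional_probability_G2_given_perceived
    {Ω : Type*} [MeasurableSpace Ω] (μ : Measure Ω) [IsProbabilityMeasure μ]
    (α β p : ℝ) (hα : 0 < α) (hβ : β ∈ Ioo (0:ℝ) 1) (hp : p ∈ Ioo (0:ℝ) 1)
    (Z B : Ω → ℝ) (hZmeas : Measurable Z) (hBmeas : Measurable B)
    (hZ : ∀ t : ℝ, 1 ≤ t → μ {ω | t < Z ω} = ENNReal.ofReal (t ^ (-α)))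
    (hB01 : ∀ ω, B ω = 0 ∨ B ω = 1)
    (hBp : μ {ω | B ω = 1} = ENNReal.ofReal p)
    (hind : ProbabilityTheory.IndepFun Z B μ)
    (Zhat : Ω → ℝ) (hZhat : ∀ ω, Zhat ω = if B ω = 1 then β * Z ω else Z ω) :
    (∀ t : ℝ, 1 ≤ t →
      (μ ({ω | B ω = 1} ∩ {ω | t ≤ Zhat ω})).toReal / (μ {ω | t ≤ Zhat ω}).toReal
        = p * β ^ α / (1 - p + p * β ^ α)) ∧
    p * β ^ α / (1 - p + p * β ^ α) < p := by
  obtain ⟨hβ0, hβ1⟩ := hβ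
  obtain ⟨hp0, hp1⟩ := hp
  have hβα0 : 0 < β ^ α := Real.rpow_pos_of_pos hβ0 α
  have hβα1 : β ^ α < 1 := Real.rpow_lt_one hβ0.le hβ1 hα
  have hden : 0 < 1 - p + p * β ^ α := by nlinarith
  constructor
  · intro t ht
    have ht0 : 0 < t := by linarith
    have htα : 0 < t ^ (-α) := Real.rpow_pos_of_pos ht0 _
    have hZge := aux_measure_ge μ α Z hZmeas hZ
    -- independence for events {B = b} and {Z ≥ s}
    have hindep : ∀ (b : ℝ) (s : ℝ),
        μ ({ω | B ω = b} ∩ {ω | s ≤ Z ω}) = μ {ω | B ω = b} * μ {ω | s ≤ Z ω} := by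
      intro b s
      have h := hind.symm.measure_inter_preimage_eq_mul {b} (Ici s)
        (measurableSet_singleton b) measurableSet_Ici
      simpa [Set.preimage, Set.mem_Ici] using h
    -- the complement event
    have hB0c : {ω | B ω = 0} = {ω | B ω = 1}ᶜ := by
      ext ω
      rcases hB01 ω with h | h <;> simp [h]
    have hmB1 : MeasurableSet {ω | B ω = 1} := hBmeas (measurableSet_singleton 1)
    have hB0p : μ {ω | B ω = 0} = ENNReal.ofReal (1 - p) := by
      rw [hB0c, measure_compl hmB1 (measure_ne_top μ _), hBp,
        measure_univ, ← ENNReal.ofReal_one, ← ENNReal.ofReal_sub _ hp0.le]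
    -- split of the event {t ≤ Zhat}
    have htβ : (1:ℝ) ≤ t / β := by
      rw [le_div_iff₀ hβ0]; nlinarith
    have hsplit : {ω | t ≤ Zhat ω}
        = ({ω | B ω = 1} ∩ {ω | t / β ≤ Z ω}) ∪ ({ω | B ω = 0} ∩ {ω | t ≤ Z ω}) := by
      ext ω
      rcases hB01 ω with h | h
      · have hz : Zhat ω = Z ω := by rw [hZhat, if_neg (by rw [h]; norm_num)]
        simp [hz, mem_setOf_eq, h]
      · have hz : Zhat ω = β * Z ω := by rw [hZhat, if_pos h]
        have hiff : t ≤ Zhat ω ↔ t / β ≤ Z ω := by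
          rw [hz, div_le_iff₀ hβ0, mul_comm]
        simp [hiff, mem_setOf_eq, h]
    have hdisj : Disjoint ({ω | B ω = 1} ∩ {ω | t / β ≤ Z ω})
        ({ω | B ω = 0} ∩ {ω | t ≤ Z ω}) := by
      apply Set.disjoint_left.mpr
      rintro ω ⟨h1, -⟩ ⟨h0, -⟩
      simp only [mem_setOf_eq] at h1 h0
      rw [h0] at h1; norm_num at h1
    -- rpow computation
    have hrpow : (t / β) ^ (-α) = β ^ α * t ^ (-α) := by
      rw [div_eq_mul_inv, Real.mul_rpow ht0.le (by positivity),
        Real.inv_rpow hβ0.le, Real.rpow_neg hβ0.le, inv_inv, mul_comm]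
    have hn1 : 0 ≤ p * (β ^ α * t ^ (-α)) :=
      mul_nonneg hp0.le (mul_nonneg hβα0.le htα.le)
    have hn2 : 0 ≤ (1 - p) * t ^ (-α) := mul_nonneg (by linarith) htα.le
    -- numerator
    have hnum : μ ({ω | B ω = 1} ∩ {ω | t ≤ Zhat ω})
        = ENNReal.ofReal (p * (β ^ α * t ^ (-α))) := by
      have hcap : {ω | B ω = 1} ∩ {ω | t ≤ Zhat ω} = {ω | B ω = 1} ∩ {ω | t / β ≤ Z ω} := by
        ext ω
        simp only [mem_inter_iff, mem_setOf_eq, and_congr_right_iff]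
        intro h
        rw [hZhat, if_pos h, div_le_iff₀ hβ0, mul_comm]
      rw [hcap, hindep 1 (t / β), hBp, hZge _ htβ, hrpow,
        ← ENNReal.ofReal_mul hp0.le]
    have hdenom : μ {ω | t ≤ Zhat ω}
        = ENNReal.ofReal (p * (β ^ α * t ^ (-α)) + (1 - p) * t ^ (-α)) := by
      rw [hsplit, measure_union hdisj
        ((hBmeas (measurableSet_singleton 0)).inter (measurableSet_le measurable_const hZmeas)),
        hindep 1 (t / β), hindep 0 t, hBp, hB0p, hZge _ htβ, hZge _ ht, hrpow,
        ← ENNReal.ofReal_mul hp0.le, ← ENNReal.ofReal_mul (by linarith),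
        ← ENNReal.ofReal_add hn1 hn2]
    rw [hnum, hdenom, ENNReal.toReal_ofReal hn1, ENNReal.toReal_ofReal (by linarith)]
    rw [div_eq_div_iff (by nlinarith : (0:ℝ) < p * (β ^ α * t ^ (-α)) + (1 - p) * t ^ (-α)).ne' hden.ne']
    ring
  · rw [div_lt_iff₀ hden]
    nlinarith [mul_pos (mul_pos hp0 (sub_pos.mpr hp1)) (sub_pos.mpr hβα1)]
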